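/- Let d ≥ 1, k ≥ 1, N ≥ 1 and 1 ≤ a ≤ N be natural numbers and α < 0 a real number. For l ∈ {1, …, d}, define p_l = l^α / Σ_{j=1}^{d} j^α, q_l = 1 − (1 − p_l)^k, and r_l = Σ_{j=a}^{N} C(N, j)·(q_l)^j·(1 − q_l)^{N−j}. Then for all 1 ≤ l ≤ l' ≤ d, r_l ≥ r_{l'}; that is, model updates of larger magnitude rank are at least as likely to be included in the global index array. -/

import Mathlib

private lemma choose_mul_left (N j : ℕ) (hN : 1 ≤ N) (hj : 1 ≤ j) :
    N * (N - 1).choose (j - 1) = N.choose j * j := by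
  obtain ⟨n, rfl⟩ : ∃ n, N = n + 1 := ⟨N - 1, (Nat.succ_pred_eq_of_pos hN).symm⟩
  obtain ⟨i, rfl⟩ : ∃ i, j = i + 1 := ⟨j - 1, (Nat.succ_pred_eq_of_pos hj).symm⟩
  simpa using Nat.add_one_mul_choose_eq n i

private lemma choose_mul_right (N j : ℕ) : N.choose j * (N - j) = N * (N - 1).choose j := by
  cases N with
  | zero =>
    cases j <;> simp
  | succ n =>
    have h1 := Nat.choose_succ_right_eq (n + 1) j
    have h2 := Nat.add_one_mul_choose_eq n j
    simp only [Nat.add_sub_cancel]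
    rw [← h1]
    simpa [Nat.succ_eq_add_one] using h2.symm

/-- The telescoped derivative term. -/
private noncomputable def Aterm (N j : ℕ) (x : ℝ) : ℝ :=
  (N : ℝ) * ((N - 1).choose (j - 1) : ℝ) * x ^ (j - 1) * (1 - x) ^ (N - j)

private lemma hasDerivAt_term (N j : ℕ) (hj : 1 ≤ j) (hjN : j ≤ N) (x : ℝ) :
    HasDerivAt (fun x : ℝ => (N.choose j : ℝ) * (x ^ j * (1 - x) ^ (N - j)))
      (Aterm N j x - Aterm N (j + 1) x) x := by
  have h1 : HasDerivAt (fun x : ℝ => x ^ j) ((j : ℝ) * x ^ (j - 1)) x := hasDerivAt_pow j x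
  have h2 : HasDerivAt (fun x : ℝ => (1 - x) ^ (N - j))
      (((N - j : ℕ) : ℝ) * (1 - x) ^ (N - j - 1) * (-1)) x :=
    ((hasDerivAt_id x).const_sub 1).pow (N - j)
  have h3 := (h1.mul h2).const_mul (N.choose j : ℝ)
  refine h3.congr_deriv ?_
  have hc1 : (N.choose j : ℝ) * (j : ℝ) = (N : ℝ) * ((N - 1).choose (j - 1) : ℝ) := by
    exact_mod_cast (choose_mul_left N j (hj.trans hjN) hj).symm
  have hc2 : (N.choose j : ℝ) * ((N - j : ℕ) : ℝ) = (N : ℝ) * ((N - 1).choose j : ℝ) := by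
    exact_mod_cast choose_mul_right N j
  have hA2 : Aterm N (j + 1) x
      = (N : ℝ) * ((N - 1).choose j : ℝ) * x ^ j * (1 - x) ^ (N - j - 1) := by
    simp only [Aterm, Nat.add_sub_cancel, Nat.sub_sub]
  rw [hA2]
  simp only [Aterm]
  rw [← hc1, ← hc2]
  ring

private lemma tail_deriv (N a : ℕ) (ha : 1 ≤ a) (x : ℝ) :
    HasDerivAt (fun x : ℝ => ∑ j ∈ Finset.Icc a N, (N.choose j : ℝ) * x ^ j * (1 - x) ^ (N - j))
      (Aterm N a x) x := by
  have hsum : HasDerivAt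
      (fun x : ℝ => ∑ j ∈ Finset.Icc a N, (N.choose j : ℝ) * (x ^ j * (1 - x) ^ (N - j)))
      (∑ j ∈ Finset.Icc a N, (Aterm N j x - Aterm N (j + 1) x)) x := by
    apply HasDerivAt.fun_sum
    intro j hj
    rw [Finset.mem_Icc] at hj
    exact hasDerivAt_term N j (ha.trans hj.1) hj.2 x
  have hfun : (fun x : ℝ => ∑ j ∈ Finset.Icc a N, (N.choose j : ℝ) * (x ^ j * (1 - x) ^ (N - j)))
      = fun x : ℝ => ∑ j ∈ Finset.Icc a N, (N.choose j : ℝ) * x ^ j * (1 - x) ^ (N - j) := by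
    funext y; apply Finset.sum_congr rfl; intro j _; ring
  rw [hfun] at hsum
  convert hsum using 1
  -- telescoping
  by_cases hle : a ≤ N
  · have key : ∑ j ∈ Finset.Icc a N, (Aterm N j x - Aterm N (j + 1) x)
        = Aterm N (a + 0) x - Aterm N (a + (N + 1 - a)) x := by
      rw [show Finset.Icc a N = Finset.Ico a (N + 1) from (Finset.Ico_add_one_right_eq_Icc a N).symm,
        Finset.sum_Ico_eq_sum_range]
      simp only [Nat.add_assoc]
      exact Finset.sum_range_sub' (fun i => Aterm N (a + i) x) (N + 1 - a)
    rw [key, show a + (N + 1 - a) = N + 1 by omega, Nat.add_zero]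
    have hz : (N - 1).choose N = 0 := Nat.choose_eq_zero_of_lt (by omega)
    simp [Aterm, hz]
  · rw [Finset.Icc_eq_empty (by omega), Finset.sum_empty]
    rcases Nat.eq_zero_or_pos N with hN0 | hN0
    · simp [Aterm, hN0]
    · have : (N - 1).choose (a - 1) = 0 := Nat.choose_eq_zero_of_lt (by omega)
      simp [Aterm, this]

private lemma tail_monotoneOn (N a : ℕ) (ha : 1 ≤ a) :
    MonotoneOn (fun x : ℝ => ∑ j ∈ Finset.Icc a N, (N.choose j : ℝ) * x ^ j * (1 - x) ^ (N - j))
      (Set.Icc (0 : ℝ) 1) := by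
  apply monotoneOn_of_deriv_nonneg (convex_Icc 0 1)
  · intro x _
    exact ((tail_deriv N a ha x).differentiableAt.continuousAt).continuousWithinAt
  · intro x _
    exact (tail_deriv N a ha x).differentiableAt.differentiableWithinAt
  · intro x hx
    rw [interior_Icc, Set.mem_Ioo] at hx
    rw [(tail_deriv N a ha x).deriv]
    have h1 : (0 : ℝ) ≤ x := hx.1.le
    have h2 : (0 : ℝ) ≤ 1 - x := by linarith [hx.2]
    unfold Aterm
    positivity

/-- In FediAC's voting phase with vote probabilities `p l = l^α / Σ_{j=1}^d j^α` (power law,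
`α < 0`), per-client vote probabilities `q l = 1 − (1 − p l)^k`, and inclusion probabilities
`r l = Σ_{j=a}^{N} C(N,j)·(q l)^j·(1 − q l)^{N−j}`, model updates of larger magnitude rank are
at least as likely to be included in the global index array: `r l ≥ r l'` for `1 ≤ l ≤ l' ≤ d`. -/
theorem fediac_inclusion_probability_antitone
    (d k N a : ℕ) (hd : 1 ≤ d) (hk : 1 ≤ k) (hN : 1 ≤ N) (ha1 : 1 ≤ a) (haN : a ≤ N)
    (α : ℝ) (hα : α < 0)
    (p q r : ℕ → ℝ)
    (hp : ∀ l ∈ Finset.Icc 1 d, p l = (l : ℝ) ^ α / ∑ j ∈ Finset.Icc 1 d, (j : ℝ) ^ α)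
    (hq : ∀ l ∈ Finset.Icc 1 d, q l = 1 - (1 - p l) ^ k)
    (hr : ∀ l ∈ Finset.Icc 1 d,
      r l = ∑ j ∈ Finset.Icc a N, (N.choose j : ℝ) * (q l) ^ j * (1 - q l) ^ (N - j)) :
    ∀ l l' : ℕ, 1 ≤ l → l ≤ l' → l' ≤ d → r l' ≤ r l := by
  intro l l' hl hll' hl'd
  have hld : l ≤ d := hll'.trans hl'd
  have hlmem : l ∈ Finset.Icc 1 d := Finset.mem_Icc.mpr ⟨hl, hld⟩
  have hl'mem : l' ∈ Finset.Icc 1 d := Finset.mem_Icc.mpr ⟨hl.trans hll', hl'd⟩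
  set S : ℝ := ∑ j ∈ Finset.Icc 1 d, (j : ℝ) ^ α with hS
  have hSpos : 0 < S := by
    apply Finset.sum_pos
    · intro j hj
      rw [Finset.mem_Icc] at hj
      exact Real.rpow_pos_of_pos (by exact_mod_cast hj.1) α
    · exact ⟨1, Finset.mem_Icc.mpr ⟨le_refl 1, hd⟩⟩
  -- bounds on p
  have hpfacts : ∀ m ∈ Finset.Icc 1 d, 0 < p m ∧ p m ≤ 1 := by
    intro m hm
    rw [Finset.mem_Icc] at hm
    have hmpos : (0 : ℝ) < (m : ℝ) ^ α := Real.rpow_pos_of_pos (by exact_mod_cast hm.1) α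
    have hle : (m : ℝ) ^ α ≤ S := by
      apply Finset.single_le_sum (f := fun j : ℕ => (j : ℝ) ^ α)
      · intro j hj
        rw [Finset.mem_Icc] at hj
        exact (Real.rpow_pos_of_pos (by exact_mod_cast hj.1) α).le
      · exact Finset.mem_Icc.mpr hm
    rw [hp m (Finset.mem_Icc.mpr hm)]
    constructor
    · positivity
    · rw [div_le_one hSpos]; exact hle
  have hqmem : ∀ m ∈ Finset.Icc 1 d, q m ∈ Set.Icc (0 : ℝ) 1 := by
    intro m hm
    obtain ⟨hp0, hp1⟩ := hpfacts m hm
    rw [hq m hm]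
    constructor
    · have : (1 - p m) ^ k ≤ 1 := pow_le_one₀ (by linarith) (by linarith)
      linarith
    · have : 0 ≤ (1 - p m) ^ k := pow_nonneg (by linarith) k
      linarith
  -- q l' ≤ q l
  have hql : q l' ≤ q l := by
    have hrp : (l' : ℝ) ^ α ≤ (l : ℝ) ^ α :=
      Real.rpow_le_rpow_of_nonpos (by exact_mod_cast hl) (by exact_mod_cast hll') hα.le
    have hpll' : p l' ≤ p l := by
      rw [hp l hlmem, hp l' hl'mem]
      gcongr
    have hp0 := (hpfacts l hlmem).1
    have hp1 := (hpfacts l hlmem).2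
    have hpow : (1 - p l) ^ k ≤ (1 - p l') ^ k :=
      pow_le_pow_left₀ (by linarith) (by linarith) k
    rw [hq l hlmem, hq l' hl'mem]
    linarith
  rw [hr l hlmem, hr l' hl'mem]
  exact tail_monotoneOn N a ha1 (hqmem l' hl'mem) (hqmem l hlmem) hql
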